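/- Monge's three-circles theorem: given three circles in the Euclidean plane with distinct radii and pairwise non-concentric centers, the three external centers of similitude (intersection points of the pairs of external common tangents, equivalently the external homothety centers) are collinear. -/

import Mathlib

/-- The external center of similitude of the circles with centers `O₁`, `O₂` and radii
`r₁`, `r₂` (with `r₁ ≠ r₂`). -/
noncomputable def extSimCenter (O₁ O₂ : Fin 2 → ℝ) (r₁ r₂ : ℝ) : Fin 2 → ℝ :=
  (r₂ - r₁)⁻¹ • (r₂ • O₁ - r₁ • O₂)

/-- **Monge's three-circles theorem.**  Given three circles in the Euclidean plane with
pairwise distinct positive radii and non-collinear (in particular pairwise distinct)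
centers, the three external centers of similitude are collinear. -/
theorem monge_three_circles (O₁ O₂ O₃ : Fin 2 → ℝ) (r₁ r₂ r₃ : ℝ)
    (hr₁ : 0 < r₁) (hr₂ : 0 < r₂) (hr₃ : 0 < r₃)
    (h₁₂ : r₁ ≠ r₂) (h₂₃ : r₂ ≠ r₃) (h₃₁ : r₃ ≠ r₁)
    (hcenters : ¬ Collinear ℝ {O₁, O₂, O₃}) :
    Collinear ℝ {extSimCenter O₁ O₂ r₁ r₂, extSimCenter O₂ O₃ r₂ r₃,
      extSimCenter O₃ O₁ r₃ r₁} := by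
  have ha : r₂ - r₁ ≠ 0 := sub_ne_zero.2 (Ne.symm h₁₂)
  have hb : r₃ - r₂ ≠ 0 := sub_ne_zero.2 (Ne.symm h₂₃)
  have hc : r₁ - r₃ ≠ 0 := sub_ne_zero.2 (Ne.symm h₃₁)
  apply (collinear_iff_of_mem (Set.mem_insert _ _)).2
  refine ⟨extSimCenter O₃ O₁ r₃ r₁ - extSimCenter O₁ O₂ r₁ r₂, ?_⟩
  rintro p hp
  simp only [Set.mem_insert_iff, Set.mem_singleton_iff] at hp
  rcases hp with rfl | rfl | rfl
  · exact ⟨0, by simp⟩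
  · refine ⟨((r₃ - r₁) * r₂) / ((r₃ - r₂) * r₁), ?_⟩
    funext i
    simp only [extSimCenter, Pi.smul_apply, Pi.sub_apply, Pi.vadd_apply, smul_eq_mul,
      vadd_eq_add, Pi.add_apply]
    field_simp
    ring
  · exact ⟨1, by funext i; simp [vadd_eq_add]⟩
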